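/- arXiv:2405.05848 — 3 statements merged into one kernel-verified Lean document; each statement's English description precedes it below -/
import Mathlib

section
/- Let P₁, P₂ be positive definite n×n matrices and α ∈ (0,1). Then the ICI fused inverse covariance P_ICI⁻¹ = P₁⁻¹ + P₂⁻¹ − (α P₁ + (1−α) P₂)⁻¹ is positive definite. -/
open Matrix

private lemma posDef_smul' {n : ℕ} {M : Matrix (Fin n) (Fin n) ℝ} (hM : M.PosDef)
    {c : ℝ} (hc : 0 < c) : (c • M).PosDef := by
  refine Matrix.PosDef.of_dotProduct_mulVec_pos ?_ fun x hx => ?_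
  · unfold Matrix.IsHermitian
    rw [conjTranspose_smul, hM.1]
    simp
  · rw [smul_mulVec, dotProduct_smul, smul_eq_mul]
    exact mul_pos hc (hM.dotProduct_mulVec_pos hx)

private lemma posDef_conj {n : ℕ} {A : Matrix (Fin n) (Fin n) ℝ} (hA : A.PosDef)
    (B : Matrix (Fin n) (Fin n) ℝ) (hB : IsUnit B) : (Bᴴ * A * B).PosDef := by
  refine Matrix.PosDef.of_dotProduct_mulVec_pos (Matrix.isHermitian_conjTranspose_mul_mul B hA.1) fun x hx => ?_
  have hx' : B *ᵥ x ≠ 0 :=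
    (Matrix.mulVec_injective_iff_isUnit.mpr hB |>.ne_iff' (by simp)).2 hx
  have key : star x ⬝ᵥ (Bᴴ * A * B) *ᵥ x = star (B *ᵥ x) ⬝ᵥ A *ᵥ (B *ᵥ x) := by
    rw [star_mulVec, mulVec_mulVec, dotProduct_mulVec, dotProduct_mulVec, vecMul_vecMul,
      Matrix.mul_assoc]
  rw [key]
  exact hA.dotProduct_mulVec_pos hx'

private lemma key_lemma {n : ℕ} {A C : Matrix (Fin n) (Fin n) ℝ}
    (hA : A.PosDef) (hC : C.PosDef) : (A⁻¹ - (A + C)⁻¹).PosDef := by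
  set D := (C⁻¹ + A⁻¹)⁻¹ with hD_def
  have hDpd : D.PosDef := (hC.inv.add hA.inv).inv
  have hAd : IsUnit A.det := (Matrix.isUnit_iff_isUnit_det _).1 hA.isUnit
  have hCd : IsUnit C.det := (Matrix.isUnit_iff_isUnit_det _).1 hC.isUnit
  have hSd : IsUnit (C⁻¹ + A⁻¹).det :=
    (Matrix.isUnit_iff_isUnit_det _).1 (hC.inv.add hA.inv).isUnit
  have e1 : (A + C) * A⁻¹ = 1 + C * A⁻¹ := by
    rw [add_mul, Matrix.mul_nonsing_inv _ hAd]
  have e2 : (1 + C * A⁻¹) * D = C := by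
    have : (1 : Matrix (Fin n) (Fin n) ℝ) + C * A⁻¹ = C * (C⁻¹ + A⁻¹) := by
      rw [mul_add, Matrix.mul_nonsing_inv _ hCd]
    rw [this, mul_assoc, hD_def, Matrix.mul_nonsing_inv _ hSd, mul_one]
  have e3 : (A + C) * (A⁻¹ - A⁻¹ * D * A⁻¹) = 1 := by
    rw [mul_sub, e1, show A⁻¹ * D * A⁻¹ = A⁻¹ * (D * A⁻¹) by rw [mul_assoc],
      ← mul_assoc, e1, ← mul_assoc, e2]
    abel
  have e4 : (A + C)⁻¹ = A⁻¹ - A⁻¹ * D * A⁻¹ := Matrix.inv_eq_right_inv e3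
  have e5 : A⁻¹ - (A + C)⁻¹ = A⁻¹ * D * A⁻¹ := by rw [e4]; abel
  rw [e5]
  have hinv : (A⁻¹)ᴴ = A⁻¹ := hA.inv.1
  rw [show A⁻¹ * D * A⁻¹ = (A⁻¹)ᴴ * D * A⁻¹ by rw [hinv]]
  exact posDef_conj hDpd A⁻¹ hA.inv.isUnit

theorem stmt7 {n : ℕ} (P₁ P₂ : Matrix (Fin n) (Fin n) ℝ)
    (h₁ : P₁.PosDef) (h₂ : P₂.PosDef) (α : ℝ) (hα : α ∈ Set.Ioo (0 : ℝ) 1) :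
    (P₁⁻¹ + P₂⁻¹ - (α • P₁ + (1 - α) • P₂)⁻¹).PosDef := by
  obtain ⟨hα0, hα1⟩ := hα
  have hα1' : 0 < 1 - α := by linarith
  set Q : Matrix (Fin n) (Fin n) ℝ := P₁⁻¹ + P₂⁻¹ with hQ
  set B : Matrix (Fin n) (Fin n) ℝ := α • P₁ + (1 - α) • P₂ with hB
  have hQpd : Q.PosDef := h₁.inv.add h₂.inv
  have hQinv : Q⁻¹.PosDef := hQpd.inv
  have h1d : IsUnit P₁.det := (Matrix.isUnit_iff_isUnit_det _).1 h₁.isUnit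
  have h2d : IsUnit P₂.det := (Matrix.isUnit_iff_isUnit_det _).1 h₂.isUnit
  have h1 : (P₁ - Q⁻¹).PosDef := by
    have := key_lemma h₁.inv h₂.inv
    rwa [Matrix.nonsing_inv_nonsing_inv _ h1d] at this
  have h2 : (P₂ - Q⁻¹).PosDef := by
    have := key_lemma h₂.inv h₁.inv
    rwa [Matrix.nonsing_inv_nonsing_inv _ h2d, add_comm P₂⁻¹ P₁⁻¹] at this
  have hBQ : (B - Q⁻¹).PosDef := by
    have : B - Q⁻¹ = α • (P₁ - Q⁻¹) + (1 - α) • (P₂ - Q⁻¹) := by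
      rw [hB]; module
    rw [this]
    exact (posDef_smul' h1 hα0).add (posDef_smul' h2 hα1')
  have hQQ : IsUnit Q.det := (Matrix.isUnit_iff_isUnit_det _).1 hQpd.isUnit
  have := key_lemma hQinv hBQ
  rwa [Matrix.nonsing_inv_nonsing_inv _ hQQ, add_sub_cancel] at this
end

section
/- For the small-angle quaternion approximation δq = ((1/2) δΘ, 1) with δΘ = m δθ, m a unit vector, the exact rotation quaternion is (m sin(δθ/2), cos(δθ/2)), and the norm of the difference between the exact quaternion and the normalized approximation (1/√(1 + δθ²/4)) ((1/2) m δθ, 1) is O(δθ³) as δθ → 0; in particular it is bounded by δθ³ for |δθ| ≤ 1. -/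
set_option maxHeartbeats 1000000 in
lemma key16 (t : ℝ) (ht : |t| ≤ 1/2) :
    (Real.sin t - 1/Real.sqrt (1+t^2) * t)^2 + (Real.cos t - 1/Real.sqrt (1+t^2))^2
      ≤ 64 * t^6 := by
  have h0 : (0:ℝ) < 1 + t^2 := by positivity
  have hs0 : 0 < Real.sqrt (1+t^2) := Real.sqrt_pos.mpr h0
  set s := Real.sqrt (1+t^2) with hsdef
  have hs2 : s^2 = 1 + t^2 := Real.sq_sqrt h0.le
  have ht' := abs_le.mp ht
  have ht2 : t^2 ≤ 1/4 := by nlinarith [ht'.1, ht'.2]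
  have hs1 : 1 ≤ s := by nlinarith
  have hsu : s ≤ 1 + t^2/2 := by nlinarith [sq_nonneg t, sq_nonneg (t^2)]
  have hsl : 1 + t^2/2 - t^4/8 ≤ s := by nlinarith [sq_nonneg t, sq_nonneg (t^2)]
  have hc1 : 1 - t^2/2 ≤ 1/s := by
    rw [le_div_iff₀ hs0]; nlinarith [sq_nonneg (t^2)]
  have hc2 : 1/s ≤ 1 := by rw [div_le_one hs0]; exact hs1
  have hc3 : 1/s ≤ 1 - t^2/2 + 3*t^4/8 := by
    rw [div_le_iff₀ hs0]; nlinarith [sq_nonneg (t^2), sq_nonneg (t^3)]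
  have ht1 : |t| ≤ 1 := le_trans ht (by norm_num)
  have hsin := Real.sin_bound ht1
  have hcos := Real.cos_bound ht1
  have habs4 : |t|^4 = t^4 := by rw [pow_abs, abs_of_nonneg (by positivity)]
  have habs6 : |t|^6 = t^6 := by rw [pow_abs, abs_of_nonneg (by positivity)]
  have habs3 : |t|^3 = |t| * t^2 := by
    rw [pow_abs]; rw [show |t^3| = |t^2 * t| by ring_nf, abs_mul,
      abs_of_nonneg (sq_nonneg t)]; ring
  have hd : |1 - 1/s| ≤ t^2/2 := abs_le.mpr ⟨by linarith, by linarith⟩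
  -- bound on the sine component
  have h1a : |Real.sin t - 1/s * t| ≤ |t|^3 := by
    have e : Real.sin t - 1/s*t
        = (Real.sin t - (t - t^3/6)) + (-(t^3)/6) + t*(1 - 1/s) := by ring
    calc |Real.sin t - 1/s*t|
        ≤ |Real.sin t - (t - t^3/6)| + |(-(t^3))/6| + |t*(1 - 1/s)| := by
          rw [e]; exact abs_add_three _ _ _
      _ ≤ |t|^4 * (5/96) + |t|^3/6 + |t| * (t^2/2) := by
          gcongr
          · refine hsin.trans ?_
            rw [pow_succ]
            nlinarith [pow_nonneg (abs_nonneg t) 4, abs_nonneg t, ht1]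
          · rw [abs_div, abs_neg, ← pow_abs]; norm_num
          · rw [abs_mul]
            exact mul_le_mul_of_nonneg_left hd (abs_nonneg t)
      _ ≤ |t|^3 := by
          rw [habs4, habs3]
          nlinarith [abs_nonneg t, sq_nonneg t, sq_abs t, ht]
  -- bound on the cosine component
  have h2a : |Real.cos t - 1/s| ≤ t^4 := by
    have e : Real.cos t - 1/s
        = (Real.cos t - (1 - t^2/2)) + ((1 - t^2/2) - 1/s) := by ring
    have hd2 : |(1 - t^2/2) - 1/s| ≤ 3*t^4/8 := abs_le.mpr ⟨by linarith, by linarith⟩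
    calc |Real.cos t - 1/s|
        ≤ |Real.cos t - (1 - t^2/2)| + |(1 - t^2/2) - 1/s| := by
          rw [e]; exact abs_add_le _ _
      _ ≤ |t|^4 * (5/96) + 3*t^4/8 := by gcongr
      _ ≤ t^4 := by rw [habs4]; nlinarith [sq_nonneg (t^2)]
  have h1 : (Real.sin t - 1/s * t)^2 ≤ t^6 := by
    calc (Real.sin t - 1/s * t)^2 = |Real.sin t - 1/s * t|^2 := (sq_abs _).symm
      _ ≤ (|t|^3)^2 := pow_le_pow_left₀ (abs_nonneg _) h1a 2
      _ = t^6 := by rw [← pow_mul, pow_abs, abs_of_nonneg (by positivity : (0:ℝ) ≤ t^6)]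
  have h2a' : |Real.cos t - 1/s| ≤ |t|^3 := by
    refine h2a.trans ?_
    rw [← habs4, pow_succ]
    have := mul_nonneg (pow_nonneg (abs_nonneg t) 3)
      (by linarith : (0:ℝ) ≤ 1 - |t|)
    nlinarith
  have h2 : (Real.cos t - 1/s)^2 ≤ t^6 := by
    calc (Real.cos t - 1/s)^2 = |Real.cos t - 1/s|^2 := (sq_abs _).symm
      _ ≤ (|t|^3)^2 := pow_le_pow_left₀ (abs_nonneg _) h2a' 2
      _ = t^6 := by rw [← pow_mul, pow_abs, abs_of_nonneg (by positivity : (0:ℝ) ≤ t^6)]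
  nlinarith [h1, h2, (by positivity : (0:ℝ) ≤ t^6)]

theorem stmt16 (m : EuclideanSpace ℝ (Fin 3)) (hm : ‖m‖ = 1) (δθ : ℝ)
    (hθ : |δθ| ≤ 1) :
    ‖((EuclideanSpace.equiv (Fin 4) ℝ).symm
        ![m 0 * Real.sin (δθ / 2), m 1 * Real.sin (δθ / 2), m 2 * Real.sin (δθ / 2),
          Real.cos (δθ / 2)] -
      (1 / Real.sqrt (1 + δθ ^ 2 / 4)) •
        (EuclideanSpace.equiv (Fin 4) ℝ).symm
          ![m 0 * (δθ / 2), m 1 * (δθ / 2), m 2 * (δθ / 2), 1] :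
        EuclideanSpace ℝ (Fin 4))‖ ≤ |δθ| ^ 3 := by
  rw [EuclideanSpace.norm_eq]
  rw [EuclideanSpace.norm_eq] at hm
  simp only [PiLp.sub_apply, PiLp.smul_apply, PiLp.continuousLinearEquiv_symm_apply,
    PiLp.toLp_apply, smul_eq_mul, Fin.sum_univ_four, Fin.sum_univ_three,
    Real.norm_eq_abs, sq_abs, Matrix.cons_val_zero, Matrix.cons_val_one, Matrix.head_cons,
    Matrix.cons_val_two, Matrix.tail_cons, Matrix.cons_val_three] at hm ⊢
  have hm2 : m 0 ^ 2 + m 1 ^ 2 + m 2 ^ 2 = 1 := by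
    have h := Real.sq_sqrt (show (0:ℝ) ≤ m 0 ^ 2 + m 1 ^ 2 + m 2 ^ 2 by positivity)
    rw [hm] at h; linarith
  have ht2 : |δθ / 2| ≤ 1/2 := by rw [abs_div]; simp; linarith
  have hkey := key16 (δθ / 2) ht2
  have hq : 1 + (δθ / 2) ^ 2 = 1 + δθ ^ 2 / 4 := by ring
  rw [hq] at hkey
  set c := 1 / Real.sqrt (1 + δθ ^ 2 / 4) with hc
  have hS : (m 0 * Real.sin (δθ / 2) - c * (m 0 * (δθ / 2))) ^ 2 +
      (m 1 * Real.sin (δθ / 2) - c * (m 1 * (δθ / 2))) ^ 2 +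
      (m 2 * Real.sin (δθ / 2) - c * (m 2 * (δθ / 2))) ^ 2 +
      (Real.cos (δθ / 2) - c * 1) ^ 2
      = (m 0 ^ 2 + m 1 ^ 2 + m 2 ^ 2) * (Real.sin (δθ / 2) - c * (δθ / 2)) ^ 2 +
        (Real.cos (δθ / 2) - c) ^ 2 := by ring
  rw [hS, hm2, one_mul]
  have hle : (Real.sin (δθ / 2) - c * (δθ / 2)) ^ 2 + (Real.cos (δθ / 2) - c) ^ 2
      ≤ (|δθ| ^ 3) ^ 2 := by
    have h64 : 64 * (δθ / 2) ^ 6 = δθ ^ 6 := by ring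
    have habs : (|δθ| ^ 3) ^ 2 = δθ ^ 6 := by
      rw [← pow_mul, pow_abs, abs_of_nonneg (by positivity : (0:ℝ) ≤ δθ ^ 6)]
    rw [habs, ← h64]
    calc (Real.sin (δθ / 2) - c * (δθ / 2)) ^ 2 + (Real.cos (δθ / 2) - c) ^ 2
        = (Real.sin (δθ / 2) - c * (δθ / 2)) ^ 2 + (Real.cos (δθ / 2) - c) ^ 2 := rfl
      _ ≤ 64 * (δθ / 2) ^ 6 := by
          have := hkey
          nlinarith [this]
  exact le_trans (Real.sqrt_le_sqrt hle) (le_of_eq (Real.sqrt_sq (by positivity)))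
end

section
/- Covariance Intersection is consistent for any correlation: if P₁ ≥ E[e₁e₁ᵀ], P₂ ≥ E[e₂e₂ᵀ] (in the Loewner order) and e_f = P_CI(α P₁⁻¹ e₁ + (1−α) P₂⁻¹ e₂) with P_CI = (α P₁⁻¹ + (1−α) P₂⁻¹)⁻¹, α ∈ [0,1], then P_CI ≥ E[e_f e_fᵀ] regardless of the cross-covariance E[e₁ e₂ᵀ]. -/
open Matrix MeasureTheory

/-- The second-moment matrix `E[u vᵀ]` of two random vectors. -/
noncomputable def covMatrix {Ω : Type*} [MeasurableSpace Ω] (μ : Measure Ω) {n : ℕ}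
    (u v : Ω → Fin n → ℝ) : Matrix (Fin n) (Fin n) ℝ :=
  Matrix.of fun i j => ∫ ω, u ω i * v ω j ∂μ

private lemma int2 {Ω : Type*} [MeasurableSpace Ω] {μ : Measure Ω} {n : ℕ}
    {f g : Ω → Fin n → ℝ} (h : ∀ i j, Integrable (fun ω => f ω i * g ω j) μ)
    (a b : Fin n → ℝ) :
    Integrable (fun ω => (∑ k, a k * f ω k) * (∑ l, b l * g ω l)) μ := by
  have e : (fun ω => (∑ k, a k * f ω k) * (∑ l, b l * g ω l))
      = fun ω => ∑ k, ∑ l, (a k * b l) * (f ω k * g ω l) := by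
    funext ω
    rw [Finset.sum_mul_sum]
    exact Finset.sum_congr rfl fun k _ => Finset.sum_congr rfl fun l _ => by ring
  rw [e]
  exact integrable_finset_sum _ fun k _ =>
    integrable_finset_sum _ fun l _ => (h k l).const_mul _

private lemma int4 {Ω : Type*} [MeasurableSpace Ω] {μ : Measure Ω} {n : ℕ}
    {f g : Ω → Fin n → ℝ}
    (h11 : ∀ i j, Integrable (fun ω => f ω i * f ω j) μ)
    (h22 : ∀ i j, Integrable (fun ω => g ω i * g ω j) μ)
    (h12 : ∀ i j, Integrable (fun ω => f ω i * g ω j) μ)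
    (a b c d : Fin n → ℝ) :
    Integrable (fun ω => (∑ k, a k * f ω k + ∑ k, b k * g ω k)
      * (∑ k, c k * f ω k + ∑ k, d k * g ω k)) μ := by
  have h21 : ∀ i j, Integrable (fun ω => g ω i * f ω j) μ := fun i j => by
    simpa [mul_comm] using h12 j i
  have e : (fun ω => (∑ k, a k * f ω k + ∑ k, b k * g ω k)
      * (∑ k, c k * f ω k + ∑ k, d k * g ω k))
      = fun ω => (∑ k, a k * f ω k) * (∑ l, c l * f ω l)
        + ((∑ k, a k * f ω k) * (∑ l, d l * g ω l)
        + ((∑ k, b k * g ω k) * (∑ l, c l * f ω l)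
        + (∑ k, b k * g ω k) * (∑ l, d l * g ω l))) := by
    funext ω; ring
  rw [e]
  exact (int2 h11 a c).add ((int2 h12 a d).add ((int2 h21 b c).add (int2 h22 b d)))

private lemma covQuad {Ω : Type*} [MeasurableSpace Ω] (μ : Measure Ω) {n : ℕ}
    (u : Ω → Fin n → ℝ) (hu : ∀ i j, Integrable (fun ω => u ω i * u ω j) μ)
    (z : Fin n → ℝ) :
    z ⬝ᵥ (covMatrix μ u u *ᵥ z) = ∫ ω, (∑ i, z i * u ω i) ^ 2 ∂μ := by
  have h1 : ∀ ω, (∑ i, z i * u ω i) ^ 2 = ∑ i, ∑ j, (z i * z j) * (u ω i * u ω j) := by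
    intro ω
    rw [sq, Finset.sum_mul_sum]
    exact Finset.sum_congr rfl fun i _ => Finset.sum_congr rfl fun j _ => by ring
  have h2 : ∫ ω, (∑ i, z i * u ω i) ^ 2 ∂μ
      = ∑ i, ∑ j, (z i * z j) * ∫ ω, u ω i * u ω j ∂μ := by
    simp_rw [h1]
    rw [integral_finset_sum _ (fun i _ =>
      integrable_finset_sum _ fun j _ => (hu i j).const_mul _)]
    refine Finset.sum_congr rfl fun i _ => ?_
    rw [integral_finset_sum _ (fun j _ => (hu i j).const_mul _)]
    exact Finset.sum_congr rfl fun j _ => integral_const_mul _ _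
  rw [h2]
  simp only [dotProduct, mulVec, covMatrix, Matrix.of_apply, Finset.mul_sum]
  exact Finset.sum_congr rfl fun i _ => Finset.sum_congr rfl fun j _ => by ring

theorem stmt18 {Ω : Type*} [MeasurableSpace Ω] (μ : Measure Ω)
    [IsProbabilityMeasure μ] {n : ℕ} (e₁ e₂ : Ω → Fin n → ℝ)
    (hmean₁ : ∀ i, ∫ ω, e₁ ω i ∂μ = 0) (hmean₂ : ∀ i, ∫ ω, e₂ ω i ∂μ = 0)
    (hint₁₁ : ∀ i j, Integrable (fun ω => e₁ ω i * e₁ ω j) μ)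
    (hint₂₂ : ∀ i j, Integrable (fun ω => e₂ ω i * e₂ ω j) μ)
    (hint₁₂ : ∀ i j, Integrable (fun ω => e₁ ω i * e₂ ω j) μ)
    (P₁ P₂ : Matrix (Fin n) (Fin n) ℝ) (h₁ : P₁.PosDef) (h₂ : P₂.PosDef)
    (hcons₁ : (P₁ - covMatrix μ e₁ e₁).PosSemidef)
    (hcons₂ : (P₂ - covMatrix μ e₂ e₂).PosSemidef)
    (α : ℝ) (hα : α ∈ Set.Icc (0 : ℝ) 1)
    (PCI : Matrix (Fin n) (Fin n) ℝ) (hPCI : PCI = (α • P₁⁻¹ + (1 - α) • P₂⁻¹)⁻¹)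
    (ef : Ω → Fin n → ℝ)
    (hef : ∀ ω, ef ω = PCI *ᵥ (α • (P₁⁻¹ *ᵥ e₁ ω) + (1 - α) • (P₂⁻¹ *ᵥ e₂ ω))) :
    (PCI - covMatrix μ ef ef).PosSemidef := by
  obtain ⟨hα0, hα1⟩ := hα
  have h₁i : (P₁⁻¹).PosDef := h₁.inv
  have h₂i : (P₂⁻¹).PosDef := h₂.inv
  have hP₁isymm : (P₁⁻¹)ᵀ = P₁⁻¹ := by
    ext i j
    conv_rhs => rw [← h₁i.1]
    simp
  have hP₂isymm : (P₂⁻¹)ᵀ = P₂⁻¹ := by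
    ext i j
    conv_rhs => rw [← h₂i.1]
    simp
  have hA : (α • P₁⁻¹ + (1 - α) • P₂⁻¹).PosDef := by
    rcases eq_or_lt_of_le hα0 with h0 | h0
    · have e : α • P₁⁻¹ + (1 - α) • P₂⁻¹ = P₂⁻¹ := by simp [← h0]
      rw [e]; exact h₂i
    · refine Matrix.PosDef.of_dotProduct_mulVec_pos ?_ ?_
      · simp [Matrix.IsHermitian, conjTranspose_add, conjTranspose_smul,
          hP₁isymm, hP₂isymm]
      · intro x hx
        have q1 := h₁i.dotProduct_mulVec_pos hx
        have q2 := h₂i.dotProduct_mulVec_pos hx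
        simp only [add_mulVec, smul_mulVec, dotProduct_add, dotProduct_smul,
          smul_eq_mul]
        have t1 := mul_pos h0 q1
        have t2 := mul_nonneg (show (0:ℝ) ≤ 1 - α by linarith) q2.le
        linarith
  have hAdet : IsUnit (α • P₁⁻¹ + (1 - α) • P₂⁻¹).det := hA.det_pos.ne'.isUnit
  have hP₁det : IsUnit P₁.det := h₁.det_pos.ne'.isUnit
  have hP₂det : IsUnit P₂.det := h₂.det_pos.ne'.isUnit
  have hPCIpos : PCI.PosDef := hPCI ▸ hA.inv
  have hAPCI : (α • P₁⁻¹ + (1 - α) • P₂⁻¹) * PCI = 1 := by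
    rw [hPCI]; exact mul_nonsing_inv _ hAdet
  have hPCIsymm : PCIᵀ = PCI := by
    ext i j
    conv_rhs => rw [← hPCIpos.1]
    simp
  -- entrywise description of ef
  have hef_comp : ∀ ω i, ef ω i
      = ∑ k, (α * (PCI * P₁⁻¹) i k) * e₁ ω k
        + ∑ k, ((1 - α) * (PCI * P₂⁻¹) i k) * e₂ ω k := by
    intro ω i
    have hv : PCI *ᵥ (α • (P₁⁻¹ *ᵥ e₁ ω) + (1 - α) • (P₂⁻¹ *ᵥ e₂ ω))
        = α • ((PCI * P₁⁻¹) *ᵥ e₁ ω) + (1 - α) • ((PCI * P₂⁻¹) *ᵥ e₂ ω) := by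
      rw [mulVec_add, mulVec_smul, mulVec_smul, mulVec_mulVec, mulVec_mulVec]
    rw [hef ω, hv]
    simp [mulVec, dotProduct, Finset.mul_sum, mul_assoc]
  have hef_int : ∀ i j, Integrable (fun ω => ef ω i * ef ω j) μ := by
    intro i j
    simp_rw [hef_comp]
    exact int4 hint₁₁ hint₂₂ hint₁₂ _ _ _ _
  have hScov : (covMatrix μ ef ef).IsHermitian := by
    ext i j
    simp [covMatrix, Matrix.conjTranspose_apply, mul_comm]
  refine Matrix.PosSemidef.of_dotProduct_mulVec_nonneg (hPCIpos.1.sub hScov) ?_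
  intro x
  simp only [star_trivial]
  rw [sub_mulVec, dotProduct_sub, sub_nonneg]
  set y : Fin n → ℝ := PCI *ᵥ x with hy
  set z₁ : Fin n → ℝ := P₁⁻¹ *ᵥ y with hz₁
  set z₂ : Fin n → ℝ := P₂⁻¹ *ᵥ y with hz₂
  -- pointwise linear identity
  have hpt : ∀ ω, (∑ i, x i * ef ω i)
      = α * (∑ i, z₁ i * e₁ ω i) + (1 - α) * (∑ i, z₂ i * e₂ ω i) := by
    intro ω
    have : (∑ i, x i * ef ω i) = x ⬝ᵥ ef ω := rfl
    rw [this, hef ω, dotProduct_mulVec, ← mulVec_transpose, hPCIsymm,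
      dotProduct_add, dotProduct_smul, dotProduct_smul,
      dotProduct_mulVec, ← mulVec_transpose, hP₁isymm,
      dotProduct_mulVec, ← mulVec_transpose, hP₂isymm]
    simp [hz₁, hz₂, hy, dotProduct, smul_eq_mul]
  -- integrability facts
  have hs11 : Integrable (fun ω => (∑ i, z₁ i * e₁ ω i) * (∑ i, z₁ i * e₁ ω i)) μ :=
    int2 hint₁₁ z₁ z₁
  have hs22 : Integrable (fun ω => (∑ i, z₂ i * e₂ ω i) * (∑ i, z₂ i * e₂ ω i)) μ :=
    int2 hint₂₂ z₂ z₂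
  have hs12 : Integrable (fun ω => (∑ i, z₁ i * e₁ ω i) * (∑ i, z₂ i * e₂ ω i)) μ :=
    int2 hint₁₂ z₁ z₂
  have hcomb : Integrable
      (fun ω => (α * (∑ i, z₁ i * e₁ ω i) + (1 - α) * (∑ i, z₂ i * e₂ ω i)) ^ 2) μ := by
    have e : (fun ω => (α * (∑ i, z₁ i * e₁ ω i) + (1 - α) * (∑ i, z₂ i * e₂ ω i)) ^ 2)
        = fun ω => α ^ 2 * ((∑ i, z₁ i * e₁ ω i) * (∑ i, z₁ i * e₁ ω i))
          + ((2 * α * (1 - α)) * ((∑ i, z₁ i * e₁ ω i) * (∑ i, z₂ i * e₂ ω i))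
          + (1 - α) ^ 2 * ((∑ i, z₂ i * e₂ ω i) * (∑ i, z₂ i * e₂ ω i))) := by
      funext ω; ring
    rw [e]
    exact (hs11.const_mul _).add ((hs12.const_mul _).add (hs22.const_mul _))
  -- key one-filter bounds
  have hb₁ : ∫ ω, (∑ i, z₁ i * e₁ ω i) ^ 2 ∂μ ≤ z₁ ⬝ᵥ y := by
    have hq := hcons₁.dotProduct_mulVec_nonneg z₁
    simp only [star_trivial, sub_mulVec, dotProduct_sub, sub_nonneg] at hq
    have hc := covQuad μ e₁ hint₁₁ z₁
    have hP : P₁ *ᵥ z₁ = y := by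
      rw [hz₁, mulVec_mulVec, mul_nonsing_inv _ hP₁det, one_mulVec]
    calc ∫ ω, (∑ i, z₁ i * e₁ ω i) ^ 2 ∂μ = z₁ ⬝ᵥ (covMatrix μ e₁ e₁ *ᵥ z₁) := hc.symm
      _ ≤ z₁ ⬝ᵥ (P₁ *ᵥ z₁) := hq
      _ = z₁ ⬝ᵥ y := by rw [hP]
  have hb₂ : ∫ ω, (∑ i, z₂ i * e₂ ω i) ^ 2 ∂μ ≤ z₂ ⬝ᵥ y := by
    have hq := hcons₂.dotProduct_mulVec_nonneg z₂
    simp only [star_trivial, sub_mulVec, dotProduct_sub, sub_nonneg] at hq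
    have hc := covQuad μ e₂ hint₂₂ z₂
    have hP : P₂ *ᵥ z₂ = y := by
      rw [hz₂, mulVec_mulVec, mul_nonsing_inv _ hP₂det, one_mulVec]
    calc ∫ ω, (∑ i, z₂ i * e₂ ω i) ^ 2 ∂μ = z₂ ⬝ᵥ (covMatrix μ e₂ e₂ *ᵥ z₂) := hc.symm
      _ ≤ z₂ ⬝ᵥ (P₂ *ᵥ z₂) := hq
      _ = z₂ ⬝ᵥ y := by rw [hP]
  -- the total identity: α z₁⬝y + (1-α) z₂⬝y = x ⬝ (PCI x)
  have heq : α * (z₁ ⬝ᵥ y) + (1 - α) * (z₂ ⬝ᵥ y) = x ⬝ᵥ (PCI *ᵥ x) := by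
    have h1 : (α • z₁ + (1 - α) • z₂) = (α • P₁⁻¹ + (1 - α) • P₂⁻¹) *ᵥ y := by
      rw [hz₁, hz₂, add_mulVec, smul_mulVec, smul_mulVec]
    have h2 : (α • P₁⁻¹ + (1 - α) • P₂⁻¹) *ᵥ y = x := by
      rw [hy, mulVec_mulVec, hAPCI, one_mulVec]
    have h3 : α * (z₁ ⬝ᵥ y) + (1 - α) * (z₂ ⬝ᵥ y) = (α • z₁ + (1 - α) • z₂) ⬝ᵥ y := by
      simp [add_dotProduct, smul_dotProduct, smul_eq_mul]
    rw [h3, h1, h2]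
  -- put things together
  have hSquad : x ⬝ᵥ (covMatrix μ ef ef *ᵥ x) = ∫ ω, (∑ i, x i * ef ω i) ^ 2 ∂μ :=
    covQuad μ ef hef_int x
  have hmono : ∫ ω, (∑ i, x i * ef ω i) ^ 2 ∂μ
      ≤ α * (∫ ω, (∑ i, z₁ i * e₁ ω i) ^ 2 ∂μ)
        + (1 - α) * (∫ ω, (∑ i, z₂ i * e₂ ω i) ^ 2 ∂μ) := by
    have e1 : ∫ ω, (∑ i, x i * ef ω i) ^ 2 ∂μ
        = ∫ ω, (α * (∑ i, z₁ i * e₁ ω i) + (1 - α) * (∑ i, z₂ i * e₂ ω i)) ^ 2 ∂μ := by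
      simp_rw [hpt]
    have hsq₁ : Integrable (fun ω => (∑ i, z₁ i * e₁ ω i) ^ 2) μ := by
      have : (fun ω => (∑ i, z₁ i * e₁ ω i) ^ 2)
          = fun ω => (∑ i, z₁ i * e₁ ω i) * (∑ i, z₁ i * e₁ ω i) := by funext ω; ring
      rw [this]; exact hs11
    have hsq₂ : Integrable (fun ω => (∑ i, z₂ i * e₂ ω i) ^ 2) μ := by
      have : (fun ω => (∑ i, z₂ i * e₂ ω i) ^ 2)
          = fun ω => (∑ i, z₂ i * e₂ ω i) * (∑ i, z₂ i * e₂ ω i) := by funext ω; ring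
      rw [this]; exact hs22
    have e2 : ∫ ω, (α * (∑ i, z₁ i * e₁ ω i) + (1 - α) * (∑ i, z₂ i * e₂ ω i)) ^ 2 ∂μ
        ≤ ∫ ω, (α * (∑ i, z₁ i * e₁ ω i) ^ 2 + (1 - α) * (∑ i, z₂ i * e₂ ω i) ^ 2) ∂μ := by
      refine integral_mono hcomb ((hsq₁.const_mul α).add (hsq₂.const_mul (1 - α))) ?_
      intro ω
      dsimp only
      have hnn : (0:ℝ) ≤ α * (1 - α) := mul_nonneg hα0 (by linarith)
      nlinarith [sq_nonneg ((∑ i, z₁ i * e₁ ω i) - (∑ i, z₂ i * e₂ ω i)),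
        mul_nonneg hnn (sq_nonneg ((∑ i, z₁ i * e₁ ω i) - (∑ i, z₂ i * e₂ ω i)))]
    have e3 : ∫ ω, (α * (∑ i, z₁ i * e₁ ω i) ^ 2 + (1 - α) * (∑ i, z₂ i * e₂ ω i) ^ 2) ∂μ
        = α * (∫ ω, (∑ i, z₁ i * e₁ ω i) ^ 2 ∂μ)
          + (1 - α) * (∫ ω, (∑ i, z₂ i * e₂ ω i) ^ 2 ∂μ) := by
      rw [integral_add (hsq₁.const_mul α) (hsq₂.const_mul (1 - α)),
        integral_const_mul, integral_const_mul]
    rw [e1]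
    exact e2.trans (le_of_eq e3)
  calc x ⬝ᵥ (covMatrix μ ef ef *ᵥ x)
      = ∫ ω, (∑ i, x i * ef ω i) ^ 2 ∂μ := hSquad
    _ ≤ α * (∫ ω, (∑ i, z₁ i * e₁ ω i) ^ 2 ∂μ)
        + (1 - α) * (∫ ω, (∑ i, z₂ i * e₂ ω i) ^ 2 ∂μ) := hmono
    _ ≤ α * (z₁ ⬝ᵥ y) + (1 - α) * (z₂ ⬝ᵥ y) :=
        add_le_add (mul_le_mul_of_nonneg_left hb₁ hα0)
          (mul_le_mul_of_nonneg_left hb₂ (by linarith))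
    _ = x ⬝ᵥ (PCI *ᵥ x) := heq
end
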